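/- Consider H^n (n ≥ 2) as the solvable Lie group AN from the Iwasawa decomposition, with its left invariant hyperbolic metric of curvature −1 and identity element e. If B_R is the closed geodesic ball centered at e of radius R, then max_{g ∈ B_R} ‖Ad_g‖ = cosh R + sinh R = e^R. -/

import Mathlib

/- STATEMENT 15: Consider `Hⁿ` (`n ≥ 2`) in the half-space model
`{x ∈ ℝⁿ : xₙ > 0}` with metric `ds² = (Σ dxᵢ²)/xₙ²`, as the solvable Lie group `AN` of the
Iwasawa decomposition: the group law is `p·q = g_p(q)` where `g_p = a_{pₙ} ∘ n_{(p₁,…,p_{n−1})}`,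
explicitly `(p·q)ⱼ = pⱼ + pₙ qⱼ` for `j < n` and `(p·q)ₙ = pₙ qₙ`; the identity is
`e = (0,…,0,1)`.  If `B_R` is the closed geodesic ball centered at `e` of radius `R ≥ 0` (for
the Riemannian distance, the infimum of hyperbolic lengths `∫ ‖c′(t)‖/cₙ(t) dt` of C¹ paths in
the half-space), then `max_{g ∈ B_R} ‖Ad_g‖ = cosh R + sinh R`, where `Ad_g = d(C_g)_e` and its
operator norm is w.r.t. the hyperbolic inner product at `e`, which is the Euclidean one.
Below `i : Fin n` is the index of the vertical coordinate (`i = n−1`). -/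

noncomputable section

/-- Hyperbolic length of a path in the half-space model. -/
def halfSpaceLength {n : ℕ} (i : Fin n) (c : ℝ → EuclideanSpace ℝ (Fin n)) : ℝ :=
  ∫ t in (0:ℝ)..1, ‖deriv c t‖ / c t i

/-- Hyperbolic (Riemannian) distance in the half-space model. -/
def halfSpaceDist {n : ℕ} (i : Fin n) (p q : EuclideanSpace ℝ (Fin n)) : ℝ :=
  sInf {L | ∃ c : ℝ → EuclideanSpace ℝ (Fin n), ContDiff ℝ 1 c ∧ c 0 = p ∧ c 1 = q ∧
    (∀ t ∈ Set.Icc (0:ℝ) 1, 0 < c t i) ∧ L = halfSpaceLength i c}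

/-- The identity element `e = (0,…,0,1)`. -/
def halfSpaceOne {n : ℕ} (i : Fin n) : EuclideanSpace ℝ (Fin n) := EuclideanSpace.single i 1

/-- The group law `p·q = g_p(q)` of the solvable group `AN`. -/
def halfSpaceMul {n : ℕ} (i : Fin n) (p q : EuclideanSpace ℝ (Fin n)) :
    EuclideanSpace ℝ (Fin n) :=
  WithLp.toLp 2 (fun j => if j = i then p i * q i else p j + p i * q j)

/-- The group inverse `p⁻¹ = g_p⁻¹(e)`. -/
def halfSpaceInv {n : ℕ} (i : Fin n) (p : EuclideanSpace ℝ (Fin n)) :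
    EuclideanSpace ℝ (Fin n) :=
  WithLp.toLp 2 (fun j => if j = i then 1 / p i else -p j / p i)

/-- Conjugation `C_p(q) = p·q·p⁻¹`. -/
def halfSpaceConj {n : ℕ} (i : Fin n) (p q : EuclideanSpace ℝ (Fin n)) :
    EuclideanSpace ℝ (Fin n) :=
  halfSpaceMul i (halfSpaceMul i p q) (halfSpaceInv i p)

/-- `‖Ad_p‖`: the operator norm of `d(C_p)_e`; at `e` the hyperbolic metric is Euclidean. -/
def halfSpaceAdNorm {n : ℕ} (i : Fin n) (p : EuclideanSpace ℝ (Fin n)) : ℝ :=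
  ‖fderiv ℝ (halfSpaceConj i p) (halfSpaceOne i)‖

end


open scoped RealInnerProductSpace

noncomputable section

def adCLM {n : ℕ} (i : Fin n) (p : EuclideanSpace ℝ (Fin n)) :
    EuclideanSpace ℝ (Fin n) →L[ℝ] EuclideanSpace ℝ (Fin n) :=
  p i • ContinuousLinearMap.id ℝ _ +
    (EuclideanSpace.proj i).smulRight (EuclideanSpace.single i 1 - p)

lemma adCLM_apply {n : ℕ} (i : Fin n) (p v : EuclideanSpace ℝ (Fin n)) :
    adCLM i p v = p i • v + v i • (EuclideanSpace.single i 1 - p) := by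
  simp [adCLM]


lemma conj_eq {n : ℕ} (i : Fin n) (p : EuclideanSpace ℝ (Fin n)) (hp : p i ≠ 0) :
    halfSpaceConj i p = fun q => adCLM i p q + (p - p i • EuclideanSpace.single i 1) := by
  funext q; ext j
  simp only [halfSpaceConj, halfSpaceMul, halfSpaceInv, adCLM_apply, PiLp.add_apply,
    PiLp.sub_apply, PiLp.smul_apply, EuclideanSpace.single_apply, smul_eq_mul, if_pos rfl]
  by_cases h : j = i
  · subst h; simp; field_simp; ring
  · simp [h]; field_simp; ring

lemma adNorm_eq {n : ℕ} (i : Fin n) (p : EuclideanSpace ℝ (Fin n)) (hp : p i ≠ 0) :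
    halfSpaceAdNorm i p = ‖adCLM i p‖ := by
  rw [halfSpaceAdNorm, conj_eq i p hp,
    ((adCLM i p).hasFDerivAt.add_const (p - p i • EuclideanSpace.single i 1)).fderiv]

lemma inner_single_one {n : ℕ} (i : Fin n) (v : EuclideanSpace ℝ (Fin n)) :
    ⟪v, EuclideanSpace.single i 1⟫ = v i := by
  rw [real_inner_comm, EuclideanSpace.inner_single_left]; simp

set_option maxHeartbeats 1000000 in
lemma arith_bound (E e' a t k V m : ℝ) (hE : 1 ≤ E) (hEe : E * e' = 1) (he'0 : 0 < e')
    (ha : 0 < a) (h' : m + 1 ≤ a * (E + e')) (hX : 0 ≤ V - t ^ 2) (hM : 0 ≤ m - a ^ 2)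
    (hβ : (k - t * a) ^ 2 ≤ (V - t ^ 2) * (m - a ^ 2)) :
    a ^ 2 * V + 2 * a * t * (t - k) + t ^ 2 * (1 - 2 * a + m) ≤ E ^ 2 * V := by
  have hE0 : 0 < E := lt_of_lt_of_le one_pos hE
  have he'E : e' ≤ E := by nlinarith
  have haE : a ≤ E := by
    by_contra hc
    push_neg at hc
    nlinarith [mul_pos (sub_pos.mpr hc) (sub_pos.mpr (lt_of_le_of_lt he'E hc))]
  have hae' : a * e' ≤ 1 := by nlinarith [mul_le_mul_of_nonneg_right haE he'0.le]
  have hD2 : 0 ≤ E ^ 2 - a ^ 2 := by nlinarith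
  have hD1 : 0 ≤ E ^ 2 - 1 - (m - a ^ 2) := by nlinarith [sq_nonneg (2 * a - E - e')]
  have h1 : 0 ≤ (E - a) * E * (E ^ 2 - a * e') := by
    apply mul_nonneg (mul_nonneg (sub_nonneg.mpr haE) hE0.le)
    nlinarith
  have h2 : 0 ≤ (a * (E + e') - a ^ 2 - 1 - (m - a ^ 2)) * E ^ 2 :=
    mul_nonneg (by linarith) (sq_nonneg E)
  have key : a ^ 2 * (E * e') - a ^ 2 = 0 := by rw [hEe, mul_one]; ring
  have hdet : a ^ 2 * (m - a ^ 2) ≤ (E ^ 2 - 1 - (m - a ^ 2)) * (E ^ 2 - a ^ 2) := by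
    have hexp : (E ^ 2 - 1 - (m - a ^ 2)) * (E ^ 2 - a ^ 2) - a ^ 2 * (m - a ^ 2) =
        (E - a) * E * (E ^ 2 - a * e') + (a * (E + e') - a ^ 2 - 1 - (m - a ^ 2)) * E ^ 2
          - (a ^ 2 * (E * e') - a ^ 2) := by ring
    linarith [h1, h2, key, hexp]
  rcases eq_or_lt_of_le hD1 with hD1e | hD1l
  · have hM0 : m - a ^ 2 = 0 := by nlinarith [hdet, mul_pos ha ha]
    have hk : k = t * a := by
      have hb : (k - t * a) ^ 2 ≤ 0 := by rw [hM0, mul_zero] at hβ; exact hβ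
      nlinarith [sq_nonneg (k - t * a)]
    have hm : m = a ^ 2 := by linarith
    subst hk hm
    have hE1 : (0:ℝ) ≤ E ^ 2 - 1 := by nlinarith
    linarith [mul_nonneg hX hD2, mul_nonneg hE1 (sq_nonneg t)]
  · have hQD1 : 0 ≤ ((E ^ 2 - a ^ 2) * (V - t ^ 2) + (E ^ 2 - 1 - (m - a ^ 2)) * t ^ 2
        + 2 * a * t * (k - t * a)) * (E ^ 2 - 1 - (m - a ^ 2)) := by
      have e : ((E ^ 2 - a ^ 2) * (V - t ^ 2) + (E ^ 2 - 1 - (m - a ^ 2)) * t ^ 2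
          + 2 * a * t * (k - t * a)) * (E ^ 2 - 1 - (m - a ^ 2)) =
          ((E ^ 2 - 1 - (m - a ^ 2)) * t + a * (k - t * a)) ^ 2
          + (V - t ^ 2) * ((E ^ 2 - 1 - (m - a ^ 2)) * (E ^ 2 - a ^ 2) - a ^ 2 * (m - a ^ 2))
          + a ^ 2 * ((V - t ^ 2) * (m - a ^ 2) - (k - t * a) ^ 2) := by ring
      rw [e]
      have n1 : 0 ≤ ((E ^ 2 - 1 - (m - a ^ 2)) * t + a * (k - t * a)) ^ 2 := sq_nonneg _
      have n2 : 0 ≤ (V - t ^ 2) * ((E ^ 2 - 1 - (m - a ^ 2)) * (E ^ 2 - a ^ 2)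
          - a ^ 2 * (m - a ^ 2)) := mul_nonneg hX (by linarith)
      have n3 : 0 ≤ a ^ 2 * ((V - t ^ 2) * (m - a ^ 2) - (k - t * a) ^ 2) :=
        mul_nonneg (sq_nonneg a) (by linarith)
      linarith
    have hQ : 0 ≤ (E ^ 2 - a ^ 2) * (V - t ^ 2) + (E ^ 2 - 1 - (m - a ^ 2)) * t ^ 2
        + 2 * a * t * (k - t * a) := by
      rcases (mul_nonneg_iff_of_pos_right hD1l).mp hQD1 with h
      exact h
    linarith [hQ]

lemma adCLM_norm_le {n : ℕ} (i : Fin n) (p : EuclideanSpace ℝ (Fin n)) (R : ℝ) (hR : 0 ≤ R)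
    (ha : 0 < p i) (h : ‖p‖ ^ 2 + 1 ≤ 2 * p i * Real.cosh R) :
    ‖adCLM i p‖ ≤ Real.exp R := by
  have hE : 1 ≤ Real.exp R := Real.one_le_exp hR
  have hE0 : (0:ℝ) < Real.exp R := Real.exp_pos R
  apply ContinuousLinearMap.opNorm_le_bound _ (le_of_lt hE0)
  intro v
  have h2 : ‖adCLM i p v‖ ^ 2 = p i ^ 2 * ‖v‖ ^ 2 + 2 * p i * v i * (v i - ⟪v, p⟫)
      + v i ^ 2 * (1 - 2 * p i + ‖p‖ ^ 2) := by
    rw [adCLM_apply, norm_add_sq_real, real_inner_smul_left, real_inner_smul_right,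
      inner_sub_right, inner_single_one]
    simp only [norm_smul, mul_pow, Real.norm_eq_abs, sq_abs]
    rw [norm_sub_sq_real]
    simp only [EuclideanSpace.inner_single_left, conj_trivial, one_mul,
      EuclideanSpace.norm_single, norm_one, one_pow]
    ring
  have hvs : ‖v - v i • EuclideanSpace.single i 1‖ ^ 2 = ‖v‖ ^ 2 - v i ^ 2 := by
    rw [norm_sub_sq_real, real_inner_smul_right, norm_smul, inner_single_one,
      EuclideanSpace.norm_single]
    simp only [Real.norm_eq_abs, norm_one, mul_one, sq_abs, mul_pow, one_pow]
    ring
  have hps : ‖p - p i • EuclideanSpace.single i 1‖ ^ 2 = ‖p‖ ^ 2 - p i ^ 2 := by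
    rw [norm_sub_sq_real, real_inner_smul_right, norm_smul, inner_single_one,
      EuclideanSpace.norm_single]
    simp only [Real.norm_eq_abs, norm_one, mul_one, sq_abs, mul_pow, one_pow]
    ring
  have hX : 0 ≤ ‖v‖ ^ 2 - v i ^ 2 := hvs ▸ sq_nonneg _
  have hM : 0 ≤ ‖p‖ ^ 2 - p i ^ 2 := hps ▸ sq_nonneg _
  have hβ : (⟪v, p⟫ - v i * p i) ^ 2 ≤ (‖v‖ ^ 2 - v i ^ 2) * (‖p‖ ^ 2 - p i ^ 2) := by
    have hcs := real_inner_mul_inner_self_le (v - v i • EuclideanSpace.single i 1)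
      (p - p i • EuclideanSpace.single i 1)
    rw [real_inner_self_eq_norm_sq, real_inner_self_eq_norm_sq, hvs, hps] at hcs
    have hinner : (⟪v - v i • EuclideanSpace.single i 1,
        p - p i • EuclideanSpace.single i 1⟫ : ℝ) = ⟪v, p⟫ - v i * p i := by
      simp only [inner_sub_left, inner_sub_right, real_inner_smul_left, real_inner_smul_right,
        inner_single_one, real_inner_self_eq_norm_sq, EuclideanSpace.inner_single_left,
        conj_trivial, one_mul, EuclideanSpace.norm_single, norm_one, one_pow,
        EuclideanSpace.single_apply, if_pos rfl, if_true]
      ring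
    rw [hinner] at hcs
    nlinarith [hcs]
  have h' : ‖p‖ ^ 2 + 1 ≤ p i * (Real.exp R + (Real.exp R)⁻¹) := by
    have hc : Real.cosh R = (Real.exp R + (Real.exp R)⁻¹) / 2 := by
      rw [Real.cosh_eq, Real.exp_neg]
    rw [hc] at h; linarith
  have hsq : ‖adCLM i p v‖ ^ 2 ≤ (Real.exp R * ‖v‖) ^ 2 := by
    rw [h2, mul_pow]
    exact arith_bound (Real.exp R) (Real.exp R)⁻¹ (p i) (v i) ⟪v, p⟫ (‖v‖ ^ 2) (‖p‖ ^ 2)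
      hE (mul_inv_cancel₀ (ne_of_gt hE0)) (inv_pos.mpr hE0) ha h' hX hM
      (by have : (⟪v,p⟫ - v i * p i) = (⟪v,p⟫ - v i * p i) := rfl; nlinarith [hβ])
  have := Real.sqrt_le_sqrt hsq
  rwa [Real.sqrt_sq (norm_nonneg _), Real.sqrt_sq (by positivity)] at this

lemma adCLM_norm_single {n : ℕ} (hn : 2 ≤ n) (i : Fin n) (R : ℝ) (hR : 0 ≤ R) :
    ‖adCLM i (EuclideanSpace.single i (Real.exp R))‖ = Real.exp R := by
  have hpi : (EuclideanSpace.single i (Real.exp R)) i = Real.exp R := by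
    simp [EuclideanSpace.single_apply]
  apply le_antisymm
  · apply adCLM_norm_le i _ R hR (by rw [hpi]; exact Real.exp_pos R)
    rw [hpi, EuclideanSpace.norm_single, Real.norm_eq_abs, abs_of_pos (Real.exp_pos R),
      Real.cosh_eq, Real.exp_neg]
    have h0 : Real.exp R ≠ 0 := ne_of_gt (Real.exp_pos R)
    apply le_of_eq
    field_simp
  · have : Nontrivial (Fin n) := Fin.nontrivial_iff_two_le.mpr hn
    obtain ⟨j, hj⟩ := exists_ne i
    set v := EuclideanSpace.single j (1:ℝ) with hv
    have hvi : v i = 0 := by simp [hv, EuclideanSpace.single_apply, hj.symm]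
    have hvn : ‖v‖ = 1 := by rw [hv, EuclideanSpace.norm_single, norm_one]
    have hAv : adCLM i (EuclideanSpace.single i (Real.exp R)) v = Real.exp R • v := by
      rw [adCLM_apply, hvi, hpi, zero_smul, add_zero]
    have := (adCLM i (EuclideanSpace.single i (Real.exp R))).le_opNorm v
    rw [hAv, hvn, mul_one, norm_smul, hvn, mul_one, Real.norm_eq_abs,
      abs_of_pos (Real.exp_pos R)] at this
    exact this

lemma length_nonneg {n : ℕ} (i : Fin n) (c : ℝ → EuclideanSpace ℝ (Fin n))
    (hpos : ∀ t ∈ Set.Icc (0:ℝ) 1, 0 < c t i) : 0 ≤ halfSpaceLength i c :=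
  intervalIntegral.integral_nonneg zero_le_one
    (fun t ht => div_nonneg (norm_nonneg _) (hpos t ht).le)

lemma lengths_bddBelow {n : ℕ} (i : Fin n) (p q : EuclideanSpace ℝ (Fin n)) :
    BddBelow {L | ∃ c : ℝ → EuclideanSpace ℝ (Fin n), ContDiff ℝ 1 c ∧ c 0 = p ∧ c 1 = q ∧
      (∀ t ∈ Set.Icc (0:ℝ) 1, 0 < c t i) ∧ L = halfSpaceLength i c} := by
  refine ⟨0, fun L hL => ?_⟩
  obtain ⟨c, _, _, _, hpos, rfl⟩ := hL
  exact length_nonneg i c hpos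

lemma dist_single_le {n : ℕ} (i : Fin n) (R : ℝ) (hR : 0 ≤ R) :
    halfSpaceDist i (halfSpaceOne i) (EuclideanSpace.single i (Real.exp R)) ≤ R := by
  apply csInf_le (lengths_bddBelow i _ _)
  refine ⟨fun t => Real.exp (t * R) • EuclideanSpace.single i 1, ?_, ?_, ?_, ?_, ?_⟩
  · exact ((Real.contDiff_exp.comp (contDiff_id.mul contDiff_const)).smul contDiff_const)
  · simp [halfSpaceOne]
  · ext j
    simp [EuclideanSpace.single_apply]
  · intro t _
    simp only [PiLp.smul_apply, EuclideanSpace.single_apply, if_pos rfl, if_true, smul_eq_mul,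
      mul_one]
    exact Real.exp_pos _
  · have hder : ∀ t : ℝ, HasDerivAt (fun s => Real.exp (s * R) • EuclideanSpace.single i (1:ℝ))
        ((Real.exp (t * R) * R) • EuclideanSpace.single i (1:ℝ)) t := by
      intro t
      exact ((hasDerivAt_mul_const R).exp).smul_const _
    have hlen : halfSpaceLength i (fun t => Real.exp (t * R) • EuclideanSpace.single i (1:ℝ))
        = ∫ t in (0:ℝ)..1, R := by
      unfold halfSpaceLength
      congr 1
      funext t
      rw [(hder t).deriv, norm_smul, EuclideanSpace.norm_single, norm_one, mul_one,
        Real.norm_eq_abs, abs_of_nonneg (mul_nonneg (Real.exp_pos _).le hR)]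
      simp only [PiLp.smul_apply, EuclideanSpace.single_apply, if_pos rfl, if_true, smul_eq_mul,
        mul_one]
      rw [mul_comm, mul_div_assoc, div_self (ne_of_gt (Real.exp_pos _)), mul_one]
    rw [hlen, intervalIntegral.integral_const, sub_zero, one_smul]

/-- `ψ t = cosh` of the hyperbolic distance from `e` to `c t`. -/
def psiF {n : ℕ} (i : Fin n) (c : ℝ → EuclideanSpace ℝ (Fin n)) : ℝ → ℝ :=
  fun t => (‖c t‖ ^ 2 + 1) / (2 * c t i)

/-- formal derivative of `psiF`. -/
def dpsiF {n : ℕ} (i : Fin n) (c : ℝ → EuclideanSpace ℝ (Fin n)) : ℝ → ℝ :=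
  fun t => (2 * ⟪c t, deriv c t⟫ * (2 * c t i) - (‖c t‖ ^ 2 + 1) * (2 * deriv c t i)) /
    (2 * c t i) ^ 2

lemma comp_sq_le {n : ℕ} (i : Fin n) (x : EuclideanSpace ℝ (Fin n)) : (x i) ^ 2 ≤ ‖x‖ ^ 2 := by
  have h1 : |(⟪x, EuclideanSpace.single i (1:ℝ)⟫ : ℝ)| ≤ ‖x‖ * ‖EuclideanSpace.single i (1:ℝ)‖ :=
    abs_real_inner_le_norm _ _
  rw [real_inner_comm, EuclideanSpace.inner_single_left, conj_trivial, one_mul,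
    EuclideanSpace.norm_single, norm_one, mul_one] at h1
  calc (x i) ^ 2 = |x i| ^ 2 := (sq_abs _).symm
    _ ≤ ‖x‖ ^ 2 := by nlinarith [abs_nonneg (x i)]

lemma psiF_ge_one {n : ℕ} (i : Fin n) (c : ℝ → EuclideanSpace ℝ (Fin n)) (t : ℝ)
    (hy : 0 < c t i) : 1 ≤ psiF i c t := by
  rw [psiF, le_div_iff₀ (by positivity)]
  nlinarith [comp_sq_le i (c t), sq_nonneg (c t i - 1)]

lemma key_deriv_ineq {n : ℕ} (i : Fin n) (c : ℝ → EuclideanSpace ℝ (Fin n)) (t : ℝ)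
    (hy : 0 < c t i) :
    dpsiF i c t ^ 2 ≤ (psiF i c t ^ 2 - 1) * (‖deriv c t‖ / c t i) ^ 2 := by
  set y := c t i with hydef
  set v := deriv c t with hvdef
  set s := ‖c t‖ ^ 2 with hsdef
  set w : EuclideanSpace ℝ (Fin n) :=
    (2 * y) • c t - (s + 1) • EuclideanSpace.single i 1 with hwdef
  have hsingle : ∀ x : EuclideanSpace ℝ (Fin n), (⟪x, EuclideanSpace.single i (1:ℝ)⟫ : ℝ) = x i := by
    intro x
    rw [real_inner_comm, EuclideanSpace.inner_single_left, conj_trivial, one_mul]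
  have hww : (⟪w, w⟫ : ℝ) = (s + 1) ^ 2 - (2 * y) ^ 2 := by
    rw [hwdef]
    simp only [inner_sub_left, inner_sub_right, real_inner_smul_left, real_inner_smul_right,
      real_inner_self_eq_norm_sq, EuclideanSpace.inner_single_left, conj_trivial, one_mul,
      EuclideanSpace.norm_single, norm_one, one_pow, hsingle, norm_smul, Real.norm_eq_abs,
      mul_pow, sq_abs, PiLp.smul_apply, smul_eq_mul, ← hydef]
    try ring
  have hwv : (⟪w, v⟫ : ℝ) = 2 * y * ⟪c t, v⟫ - (s + 1) * v i := by
    rw [hwdef]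
    simp only [inner_sub_left, real_inner_smul_left, EuclideanSpace.inner_single_left,
      conj_trivial, one_mul, hsingle]
    try ring
  have hCS : (⟪w, v⟫ : ℝ) ^ 2 ≤ ((s + 1) ^ 2 - (2 * y) ^ 2) * ‖v‖ ^ 2 := by
    have h := real_inner_mul_inner_self_le w v
    rw [hww, real_inner_self_eq_norm_sq] at h
    nlinarith [h]
  have hdψ : dpsiF i c t = (⟪w, v⟫ : ℝ) / (2 * y ^ 2) := by
    rw [dpsiF, hwv, hydef, hvdef]
    field_simp
    ring
  have hψ : psiF i c t = (s + 1) / (2 * y) := rfl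
  rw [hdψ, hψ]
  have hexp : (((s + 1) / (2 * y)) ^ 2 - 1) * (‖v‖ / y) ^ 2
      = (((s + 1) ^ 2 - (2 * y) ^ 2) * ‖v‖ ^ 2) / (2 * y ^ 2) ^ 2 := by
    field_simp
    try ring
    try exact Or.inl trivial
  rw [hexp, div_pow]
  exact (div_le_div_iff_of_pos_right (by positivity)).mpr hCS

set_option maxHeartbeats 1000000 in
lemma length_ge {n : ℕ} (i : Fin n) (c : ℝ → EuclideanSpace ℝ (Fin n)) (hc : ContDiff ℝ 1 c)
    (h0 : c 0 = halfSpaceOne i) (hpos : ∀ t ∈ Set.Icc (0:ℝ) 1, 0 < c t i) (ε : ℝ) (hε : 0 < ε) :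
    Real.log (psiF i c 1 + Real.sqrt (psiF i c 1 ^ 2 - 1 + ε))
      ≤ Real.log (1 + Real.sqrt ε) + halfSpaceLength i c := by
  have hcont_c : Continuous c := hc.continuous
  have hcont_d : Continuous (deriv c) := hc.continuous_deriv le_rfl
  have hcont_y : Continuous (fun t => c t i) := by
    have := (EuclideanSpace.proj (𝕜 := ℝ) i).continuous.comp hcont_c
    exact this
  have hcont_dy : Continuous (fun t => deriv c t i) := by
    have := (EuclideanSpace.proj (𝕜 := ℝ) i).continuous.comp hcont_d
    exact this
  have hyne : ∀ t ∈ Set.Icc (0:ℝ) 1, (2:ℝ) * c t i ≠ 0 :=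
    fun t ht => ne_of_gt (by have := hpos t ht; linarith)
  set F : ℝ → ℝ := fun t => Real.log (psiF i c t + Real.sqrt (psiF i c t ^ 2 - 1 + ε)) with hF
  set G : ℝ → ℝ := fun t => dpsiF i c t / Real.sqrt (psiF i c t ^ 2 - 1 + ε) with hG
  have hApos : ∀ t ∈ Set.Icc (0:ℝ) 1, 0 < psiF i c t ^ 2 - 1 + ε := by
    intro t ht
    have h1 := psiF_ge_one i c t (hpos t ht)
    nlinarith
  -- pointwise derivatives
  have hψder : ∀ t ∈ Set.Icc (0:ℝ) 1, HasDerivAt (psiF i c) (dpsiF i c t) t := by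
    intro t ht
    have hct : HasDerivAt c (deriv c t) t := (hc.differentiable one_ne_zero t).hasDerivAt
    have hin := HasDerivAt.inner ℝ hct hct
    have fun_eq : (fun s : ℝ => (⟪c s, c s⟫ : ℝ)) = fun s => ‖c s‖ ^ 2 :=
      funext fun s => real_inner_self_eq_norm_sq _
    have val_eq : (⟪c t, deriv c t⟫ : ℝ) + ⟪deriv c t, c t⟫ = 2 * ⟪c t, deriv c t⟫ := by
      rw [real_inner_comm (deriv c t) (c t)]; ring
    rw [fun_eq, val_eq] at hin
    have hyd : HasDerivAt (fun s => c s i) (deriv c t i) t := by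
      have := (EuclideanSpace.proj (𝕜 := ℝ) i).hasFDerivAt.comp_hasDerivAt t hct
      exact this
    exact (hin.add_const 1).div (hyd.const_mul 2) (hyne t ht)
  have hFder : ∀ t ∈ Set.Icc (0:ℝ) 1, HasDerivAt F (G t) t := by
    intro t ht
    have hψt := hψder t ht
    have hA := hApos t ht
    have hsA : 0 < Real.sqrt (psiF i c t ^ 2 - 1 + ε) := Real.sqrt_pos.mpr hA
    have hψ1 := psiF_ge_one i c t (hpos t ht)
    have hinner : HasDerivAt (fun s => psiF i c s ^ 2 - 1 + ε)
        ((2:ℕ) * psiF i c t ^ (2-1) * dpsiF i c t) t := ((hψt.pow 2).sub_const 1).add_const ε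
    have hsqrt := (Real.hasDerivAt_sqrt (ne_of_gt hA)).comp t hinner
    have hsum := hψt.add hsqrt
    have hlog := (Real.hasDerivAt_log
      (by positivity : psiF i c t + Real.sqrt (psiF i c t ^ 2 - 1 + ε) ≠ 0)).comp t hsum
    refine hlog.congr_deriv ?_
    rw [hG]
    simp only [Function.comp]
    field_simp
    ring
  -- pointwise bound G ≤ speed
  have hGle : ∀ t ∈ Set.Icc (0:ℝ) 1, G t ≤ ‖deriv c t‖ / c t i := by
    intro t ht
    have hy := hpos t ht
    have hA := hApos t ht
    have hsA : 0 < Real.sqrt (psiF i c t ^ 2 - 1 + ε) := Real.sqrt_pos.mpr hA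
    have hspeed : 0 ≤ ‖deriv c t‖ / c t i := div_nonneg (norm_nonneg _) hy.le
    have hk := key_deriv_ineq i c t hy
    have h1 : dpsiF i c t ^ 2 ≤ (Real.sqrt (psiF i c t ^ 2 - 1 + ε) * (‖deriv c t‖ / c t i)) ^ 2 := by
      rw [mul_pow, Real.sq_sqrt hA.le]
      nlinarith [mul_nonneg hε.le (sq_nonneg (‖deriv c t‖ / c t i))]
    have h2 : dpsiF i c t ≤ Real.sqrt (psiF i c t ^ 2 - 1 + ε) * (‖deriv c t‖ / c t i) := by
      have h3 := Real.sqrt_le_sqrt h1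
      rw [Real.sqrt_sq_eq_abs, Real.sqrt_sq (by positivity)] at h3
      exact le_trans (le_abs_self _) h3
    rw [hG]
    rw [div_le_iff₀ hsA]
    linarith [h2]
  -- integrability
  have hIcc : Set.uIcc (0:ℝ) 1 = Set.Icc 0 1 := Set.uIcc_of_le zero_le_one
  have hycont : ContinuousOn (fun t => (2:ℝ) * c t i) (Set.Icc 0 1) :=
    (continuous_const.mul hcont_y).continuousOn
  have hψcont : ContinuousOn (psiF i c) (Set.Icc 0 1) := by
    apply ContinuousOn.div ((hcont_c.norm.pow 2).add continuous_const).continuousOn hycont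
    exact hyne
  have hdψcont : ContinuousOn (dpsiF i c) (Set.Icc 0 1) := by
    apply ContinuousOn.div
    · exact (((continuous_const.mul (hcont_c.inner hcont_d)).mul
        (continuous_const.mul hcont_y)).sub
        (((hcont_c.norm.pow 2).add continuous_const).mul
          (continuous_const.mul hcont_dy))).continuousOn
    · exact hycont.pow 2
    · intro t ht
      exact pow_ne_zero 2 (hyne t ht)
  have hsqrtcont : ContinuousOn (fun t => Real.sqrt (psiF i c t ^ 2 - 1 + ε)) (Set.Icc 0 1) :=
    Real.continuous_sqrt.comp_continuousOn (((hψcont.pow 2).sub continuousOn_const).add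
      continuousOn_const)
  have hGint : IntervalIntegrable G MeasureTheory.volume 0 1 := by
    apply ContinuousOn.intervalIntegrable
    rw [hIcc]
    exact hdψcont.div hsqrtcont (fun t ht => ne_of_gt (Real.sqrt_pos.mpr (hApos t ht)))
  have hSint : IntervalIntegrable (fun t => ‖deriv c t‖ / c t i) MeasureTheory.volume 0 1 := by
    apply ContinuousOn.intervalIntegrable
    rw [hIcc]
    exact hcont_d.norm.continuousOn.div hcont_y.continuousOn
      (fun t ht => ne_of_gt (hpos t ht))
  have hFTC : ∫ t in (0:ℝ)..1, G t = F 1 - F 0 :=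
    intervalIntegral.integral_eq_sub_of_hasDerivAt (by rw [hIcc]; exact hFder) hGint
  have hmono : ∫ t in (0:ℝ)..1, G t ≤ ∫ t in (0:ℝ)..1, ‖deriv c t‖ / c t i :=
    intervalIntegral.integral_mono_on zero_le_one hGint hSint hGle
  have hF0 : F 0 = Real.log (1 + Real.sqrt ε) := by
    have hψ0 : psiF i c 0 = 1 := by
      rw [psiF, h0, halfSpaceOne, EuclideanSpace.norm_single]
      simp [EuclideanSpace.single_apply]
    rw [hF]
    simp only [hψ0]
    norm_num
  have hlen : halfSpaceLength i c = ∫ t in (0:ℝ)..1, ‖deriv c t‖ / c t i := rfl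
  have hF1 : F 1 = Real.log (psiF i c 1 + Real.sqrt (psiF i c 1 ^ 2 - 1 + ε)) := rfl
  linarith [hFTC, hmono, hF0 ▸ hF1 ▸ (by linarith [hFTC, hmono] : F 1 - F 0 ≤ halfSpaceLength i c)]

lemma dist_cosh_bound {n : ℕ} (i : Fin n) (p : EuclideanSpace ℝ (Fin n)) (hp : 0 < p i)
    (R : ℝ) (hR : 0 ≤ R) (hd : halfSpaceDist i (halfSpaceOne i) p ≤ R) :
    ‖p‖ ^ 2 + 1 ≤ 2 * p i * Real.cosh R := by
  set φ := (‖p‖ ^ 2 + 1) / (2 * p i) with hφdef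
  have h2p : (0:ℝ) < 2 * p i := by linarith
  have hφ1 : 1 ≤ φ := by
    rw [hφdef, le_div_iff₀ h2p]
    nlinarith [comp_sq_le i p, sq_nonneg (p i - 1)]
  set u := φ + Real.sqrt (φ ^ 2 - 1) with hudef
  have hσ : 0 ≤ Real.sqrt (φ ^ 2 - 1) := Real.sqrt_nonneg _
  have hu1 : 1 ≤ u := by rw [hudef]; linarith
  have hu0 : 0 < u := lt_of_lt_of_le one_pos hu1
  -- every admissible length is ≥ log u
  have hlb : ∀ L ∈ {L | ∃ c : ℝ → EuclideanSpace ℝ (Fin n), ContDiff ℝ 1 c ∧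
      c 0 = halfSpaceOne i ∧ c 1 = p ∧ (∀ t ∈ Set.Icc (0:ℝ) 1, 0 < c t i) ∧
      L = halfSpaceLength i c}, Real.log u ≤ L := by
    rintro L ⟨c, hc, h0, h1, hposc, rfl⟩
    set L := halfSpaceLength i c with hL
    have hψ1eq : psiF i c 1 = φ := by rw [psiF, h1, hφdef]
    have keyε : ∀ ε : ℝ, 0 < ε →
        φ + Real.sqrt (φ ^ 2 - 1 + ε) ≤ (1 + Real.sqrt ε) * Real.exp L := by
      intro ε hε
      have h := length_ge i c hc h0 hposc ε hε
      rw [hψ1eq] at h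
      have hεs : (0:ℝ) < 1 + Real.sqrt ε := by positivity
      have hpos' : (0:ℝ) < φ + Real.sqrt (φ ^ 2 - 1 + ε) := by
        have := Real.sqrt_nonneg (φ ^ 2 - 1 + ε); linarith
      calc φ + Real.sqrt (φ ^ 2 - 1 + ε)
          = Real.exp (Real.log (φ + Real.sqrt (φ ^ 2 - 1 + ε))) := (Real.exp_log hpos').symm
        _ ≤ Real.exp (Real.log (1 + Real.sqrt ε) + L) := Real.exp_le_exp.mpr h
        _ = (1 + Real.sqrt ε) * Real.exp L := by rw [Real.exp_add, Real.exp_log hεs]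
    have huL : u ≤ Real.exp L := by
      have htend : Filter.Tendsto (fun ε : ℝ => (1 + Real.sqrt ε) * Real.exp L)
          (nhdsWithin 0 (Set.Ioi 0)) (nhds ((1 + Real.sqrt 0) * Real.exp L)) :=
        (((continuous_const.add Real.continuous_sqrt).mul continuous_const).tendsto 0).mono_left
          nhdsWithin_le_nhds
      rw [Real.sqrt_zero, add_zero, one_mul] at htend
      apply ge_of_tendsto htend
      filter_upwards [self_mem_nhdsWithin] with ε hε
      have hmono : Real.sqrt (φ ^ 2 - 1) ≤ Real.sqrt (φ ^ 2 - 1 + ε) :=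
        Real.sqrt_le_sqrt (by simp at hε; linarith)
      calc u ≤ φ + Real.sqrt (φ ^ 2 - 1 + ε) := by rw [hudef]; linarith
        _ ≤ _ := keyε ε (by simpa using hε)
    rw [← Real.exp_log hu0] at huL
    exact (Real.exp_le_exp.mp huL)
  -- the set of lengths is nonempty (straight segment)
  have hne : {L | ∃ c : ℝ → EuclideanSpace ℝ (Fin n), ContDiff ℝ 1 c ∧
      c 0 = halfSpaceOne i ∧ c 1 = p ∧ (∀ t ∈ Set.Icc (0:ℝ) 1, 0 < c t i) ∧
      L = halfSpaceLength i c}.Nonempty := by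
    refine ⟨halfSpaceLength i (fun t => halfSpaceOne i + t • (p - halfSpaceOne i)),
      (fun t => halfSpaceOne i + t • (p - halfSpaceOne i)), ?_, ?_, ?_, ?_, rfl⟩
    · exact contDiff_const.add (contDiff_id.smul contDiff_const)
    · simp
    · simp
    · intro t ht
      have he1 : (halfSpaceOne i) i = 1 := by
        rw [halfSpaceOne, EuclideanSpace.single_apply, if_pos rfl]
      simp only [PiLp.add_apply, PiLp.smul_apply, PiLp.sub_apply, he1, smul_eq_mul]
      nlinarith [ht.1, ht.2, hp, mul_nonneg ht.1 hp.le]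
  have hloginf : Real.log u ≤ R := le_trans (le_csInf hne hlb) hd
  have huR : u ≤ Real.exp R := by
    rw [← Real.exp_log hu0]
    exact Real.exp_le_exp.mpr hloginf
  -- conclude
  have hsq : Real.sqrt (φ ^ 2 - 1) ^ 2 = φ ^ 2 - 1 := Real.sq_sqrt (by nlinarith)
  have hqu : u ^ 2 - 2 * u * φ + 1 = 0 := by
    have h1 : u - φ = Real.sqrt (φ ^ 2 - 1) := by rw [hudef]; ring
    have h2 : (u - φ) ^ 2 = φ ^ 2 - 1 := by rw [h1, hsq]
    nlinarith [h2]
  have hE : 1 ≤ Real.exp R := Real.one_le_exp hR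
  have hE0 : 0 < Real.exp R := Real.exp_pos R
  have hEinv : 0 < (Real.exp R)⁻¹ := inv_pos.mpr hE0
  have hEinv1 : (Real.exp R)⁻¹ ≤ 1 := by
    rw [inv_le_one_iff₀]; right; exact hE
  have hEe : Real.exp R * (Real.exp R)⁻¹ = 1 := mul_inv_cancel₀ (ne_of_gt hE0)
  have hφcosh : 2 * φ ≤ Real.exp R + (Real.exp R)⁻¹ := by
    nlinarith [mul_nonneg (sub_nonneg.mpr huR) (sub_nonneg.mpr (le_trans hEinv1 hu1)), hqu, hu0]
  have hcosh : Real.cosh R = (Real.exp R + (Real.exp R)⁻¹) / 2 := by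
    rw [Real.cosh_eq, Real.exp_neg]
  rw [hcosh]
  have := (div_le_iff₀ h2p).mp (le_trans (le_of_eq hφdef.symm) (by linarith : φ ≤ (Real.exp R + (Real.exp R)⁻¹) / 2))
  linarith [this]


lemma main_aux (n : ℕ) (hn : 2 ≤ n) (R : ℝ) (hR : 0 ≤ R) (i : Fin n) :
    sSup (halfSpaceAdNorm i ''
        {p : EuclideanSpace ℝ (Fin n) | 0 < p i ∧ halfSpaceDist i (halfSpaceOne i) p ≤ R}) =
      Real.cosh R + Real.sinh R := by
  rw [Real.cosh_add_sinh]
  set p₀ := EuclideanSpace.single i (Real.exp R) with hp₀def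
  have hp₀i : p₀ i = Real.exp R := by
    rw [hp₀def, EuclideanSpace.single_apply, if_pos rfl]
  have hp₀pos : 0 < p₀ i := by rw [hp₀i]; exact Real.exp_pos R
  have hp₀mem : p₀ ∈ {p : EuclideanSpace ℝ (Fin n) |
      0 < p i ∧ halfSpaceDist i (halfSpaceOne i) p ≤ R} :=
    ⟨hp₀pos, dist_single_le i R hR⟩
  have hval : halfSpaceAdNorm i p₀ = Real.exp R := by
    rw [adNorm_eq i p₀ (ne_of_gt hp₀pos), hp₀def, adCLM_norm_single hn i R hR]
  have hub : ∀ x ∈ halfSpaceAdNorm i '' {p : EuclideanSpace ℝ (Fin n) |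
      0 < p i ∧ halfSpaceDist i (halfSpaceOne i) p ≤ R}, x ≤ Real.exp R := by
    rintro x ⟨p, ⟨hpi, hpd⟩, rfl⟩
    rw [adNorm_eq i p (ne_of_gt hpi)]
    exact adCLM_norm_le i p R hR hpi (dist_cosh_bound i p hpi R hR hpd)
  apply le_antisymm
  · exact csSup_le ⟨_, ⟨p₀, hp₀mem, rfl⟩⟩ hub
  · exact le_csSup ⟨Real.exp R, hub⟩ ⟨p₀, hp₀mem, hval⟩

end

theorem sup_adNorm_ball_eq_exp (n : ℕ) (hn : 2 ≤ n) (R : ℝ) (hR : 0 ≤ R) :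
    letI i : Fin n := ⟨n - 1, by omega⟩
    sSup (halfSpaceAdNorm i ''
        {p : EuclideanSpace ℝ (Fin n) | 0 < p i ∧ halfSpaceDist i (halfSpaceOne i) p ≤ R}) =
      Real.cosh R + Real.sinh R :=
  main_aux n hn R hR _
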